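/- Let σ be a sort of a well-defined ADT. If there are two distinct paths from σ to itself in the dependency graph D that are not repetitions of one another, then there exist two incomparable constructor terms t₁[•], t₂[•] of sort σ with holes of sort σ; consequently, by the expansion lemma for incomparable terms, σ is expanding. -/

import Mathlib

structure ADTSig where
  numSorts : ℕ
  numCtors : ℕ
  ctorArgs : Fin numCtors → List (Fin numSorts)
  ctorRes : Fin numCtors → Fin numSorts

namespace ADTSig

inductive Term (S : ADTSig) : Fin S.numSorts → Type where
  | mk (f : Fin S.numCtors)
      (args : (i : Fin (S.ctorArgs f).length) → Term S ((S.ctorArgs f).get i)) :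
      Term S (S.ctorRes f)

def Term.size {S : ADTSig} : {σ : Fin S.numSorts} → Term S σ → ℕ
  | _, .mk _ args => 1 + ∑ i, (args i).size

def Term.head {S : ADTSig} : {σ : Fin S.numSorts} → Term S σ → Fin S.numCtors
  | _, .mk f _ => f

def WellDefined (S : ADTSig) : Prop := ∀ σ, Nonempty (S.Term σ)

def ExpandingSort (S : ADTSig) (σ : Fin S.numSorts) : Prop :=
  ∀ n : ℕ, ∃ b : ℕ, ∀ b' ≥ b,
    (∀ t : S.Term σ, t.size ≠ b') ∨ n ≤ Nat.card {t : S.Term σ // t.size = b'}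

def ExpandingADT (S : ADTSig) : Prop := ∀ σ, ExpandingSort S σ

/-- The size image `𝕊_σ`. -/
def SizeImage (S : ADTSig) (σ : Fin S.numSorts) : Set ℕ :=
  {b | ∃ t : S.Term σ, t.size = b}

/-- The relativised size image `𝕊^f_σ`: sizes of terms not starting with `f`. -/
def RelSizeImage (S : ADTSig) (σ : Fin S.numSorts) (f : Fin S.numCtors) : Set ℕ :=
  {b | ∃ t : S.Term σ, t.head ≠ f ∧ t.size = b}

/-- Vertices of the bipartite dependency graph: sorts and constructors. -/
abbrev DepVertex (S : ADTSig) := Sum (Fin S.numSorts) (Fin S.numCtors)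

/-- Edges of the dependency graph `D`: `(σ₀, f)` for every constructor `f`
with result sort `σ₀`, and `(f, σ_j)` for every argument sort `σ_j` of `f`. -/
def DepEdge (S : ADTSig) : DepVertex S → DepVertex S → Prop
  | .inl σ, .inr f => S.ctorRes f = σ
  | .inr f, .inl σ => σ ∈ S.ctorArgs f
  | .inl _, .inl _ => False
  | .inr _, .inr _ => False

/-- `l` is a (nonempty) path in `D` from `σ` to itself: a closed walk. -/
def IsClosedWalk (S : ADTSig) (σ : Fin S.numSorts) (l : List (DepVertex S)) : Prop :=
  l ≠ [] ∧ List.Chain (DepEdge S) (Sum.inl σ) l ∧ l.getLast? = some (Sum.inl σ)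

/-- The vertex list (after the starting vertex `σ¹ = ss 0`) of the cycle
`σ¹ → f¹ → σ² → f² → ⋯ → fⁿ → σ¹` given by `ss`, `fs`. -/
def cycleList (S : ADTSig) (n : ℕ) (ss : Fin (n + 1) → Fin S.numSorts)
    (fs : Fin (n + 1) → Fin S.numCtors) : List (DepVertex S) :=
  ((List.finRange (n + 1)).map (fun i => [Sum.inr (fs i), Sum.inl (ss (i + 1))])).flatten

/-- Constructor terms with exactly one hole `•` of sort `τ`; `Ctx S τ σ` is a
term of sort `σ` with a hole of sort `τ`. -/
inductive Ctx (S : ADTSig) (τ : Fin S.numSorts) : Fin S.numSorts → Type where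
  | hole : Ctx S τ τ
  | node (f : Fin S.numCtors) (i : Fin (S.ctorArgs f).length)
      (c : Ctx S τ ((S.ctorArgs f).get i))
      (side : (j : Fin (S.ctorArgs f).length) → j ≠ i →
         S.Term ((S.ctorArgs f).get j)) :
      Ctx S τ (S.ctorRes f)

/-- `c.fill t` = `c[t]`, filling the hole of `c` with the term `t`. -/
def Ctx.fill {S : ADTSig} {τ : Fin S.numSorts} :
    {σ : Fin S.numSorts} → Ctx S τ σ → S.Term τ → S.Term σ
  | _, .hole, t => t
  | _, .node f i c side, t =>
      Term.mk f (fun j =>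
        if h : j = i then cast (by rw [h]) (c.fill t) else side j h)

/-- The size `|t[•]|` of a term with hole: the number of constructor
occurrences (the hole does not count). -/
def Ctx.csize {S : ADTSig} {τ : Fin S.numSorts} :
    {σ : Fin S.numSorts} → Ctx S τ σ → ℕ
  | _, .hole => 0
  | _, .node f i c side =>
      1 + c.csize + ∑ j, if h : j = i then 0 else (side j h).size

/-- Composition of terms with holes: `t₁[•] ∘ t₂[•] = t₁[t₂[•]]`. -/
def Ctx.comp {S : ADTSig} {τ ρ : Fin S.numSorts} :
    {σ : Fin S.numSorts} → Ctx S τ σ → Ctx S ρ τ → Ctx S ρ σ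
  | _, .hole, d => d
  | _, .node f i c side, d => .node f i (c.comp d) side

/-- `c^i`: the `i`-fold composition of a term with hole with itself. -/
def Ctx.pow {S : ADTSig} {σ : Fin S.numSorts} (c : Ctx S σ σ) : ℕ → Ctx S σ σ
  | 0 => .hole
  | i + 1 => c.comp (c.pow i)

/-- Two terms with holes are incomparable if all their fillings differ. -/
def Incomparable {S : ADTSig} {τ₁ τ₂ σ : Fin S.numSorts}
    (c₁ : Ctx S τ₁ σ) (c₂ : Ctx S τ₂ σ) : Prop :=
  ∀ (s₁ : S.Term τ₁) (s₂ : S.Term τ₂), c₁.fill s₁ ≠ c₂.fill s₂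

end ADTSig
namespace TwoPathsProof
open ADTSig

/-- Plain (non-dependent) trees used as injective-enough codes of terms. -/
inductive PT : Type where
  | mk (f : ℕ) (children : List PT)

mutual
def PT.psize : PT → ℕ
  | .mk _ l => 1 + PT.psizeL l
def PT.psizeL : List PT → ℕ
  | [] => 0
  | p :: l => PT.psize p + PT.psizeL l
end

theorem PT.psizeL_eq : ∀ l : List PT, PT.psizeL l = (l.map PT.psize).sum
  | [] => rfl
  | p :: l => by simp [PT.psizeL, PT.psizeL_eq l]

theorem PT.psizeL_ofFn {n : ℕ} (g : Fin n → PT) :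
    PT.psizeL (List.ofFn g) = ∑ i, (g i).psize := by
  rw [PT.psizeL_eq, List.map_ofFn, List.sum_ofFn]; rfl

theorem PT.psize_pos (p : PT) : 1 ≤ p.psize := by
  cases p with | mk f l => simp [PT.psize]

variable {S : ADTSig}

def code : {σ : Fin S.numSorts} → S.Term σ → PT
  | _, .mk f args => .mk f.val (List.ofFn fun i => code (args i))

theorem cast_self {α : Sort _} (h : α = α) (x : α) : cast h x = x :=
  cast_eq_iff_heq.mpr HEq.rfl

theorem size_pos {σ : Fin S.numSorts} (t : S.Term σ) : 1 ≤ t.size := by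
  cases t with | mk f args => simp [Term.size]

theorem psize_code {σ : Fin S.numSorts} (t : S.Term σ) : (code t).psize = t.size := by
  induction t with
  | mk f args ih =>
    simp [code, Term.size, PT.psize, PT.psizeL_ofFn, ih]

theorem code_eqRec {σ σ' : Fin S.numSorts} (h : σ = σ') (t : S.Term σ) :
    code (h ▸ t) = code t := by subst h; rfl


theorem fill_size {τ : Fin S.numSorts} :
    ∀ {σ : Fin S.numSorts} (c : Ctx S τ σ) (t : S.Term τ),
      (c.fill t).size = c.csize + t.size := by
  intro σ c
  induction c with
  | hole => intro t; simp [Ctx.fill, Ctx.csize]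
  | node f i c side ih =>
    intro t
    simp only [Ctx.fill, Ctx.csize, Term.size]
    rw [← Finset.add_sum_erase _ _ (Finset.mem_univ i),
        ← Finset.add_sum_erase _ (fun j => if h : j = i then 0 else (side j h).size)
          (Finset.mem_univ i)]
    rw [dif_pos rfl, dif_pos rfl, cast_self, ih]
    have hcong : ∑ j ∈ Finset.univ.erase i,
        (if h : j = i then cast (by rw [h]) (c.fill t) else side j h).size
        = ∑ j ∈ Finset.univ.erase i,
        (if h : j = i then 0 else (side j h).size) := by
      refine Finset.sum_congr rfl (fun j hj => ?_)
      have hji : j ≠ i := (Finset.mem_erase.mp hj).1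
      rw [dif_neg hji, dif_neg hji]
    rw [hcong]; omega

theorem fill_inj {τ : Fin S.numSorts} :
    ∀ {σ : Fin S.numSorts} (c : Ctx S τ σ) (t t' : S.Term τ),
      c.fill t = c.fill t' → t = t' := by
  intro σ c
  induction c with
  | hole => intro t t' h; exact h
  | node f i c side ih =>
    intro t t' h
    simp only [Ctx.fill] at h
    injection h with h1 h2
    have h3 := congrFun h2 i
    rw [dif_pos rfl, dif_pos rfl, cast_self, cast_self] at h3
    exact ih t t' h3

theorem comp_fill {τ ρ : Fin S.numSorts} :
    ∀ {σ : Fin S.numSorts} (c : Ctx S τ σ) (d : Ctx S ρ τ) (t : S.Term ρ),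
      (c.comp d).fill t = c.fill (d.fill t) := by
  intro σ c
  induction c with
  | hole => intro d t; rfl
  | node f i c side ih =>
    intro d t
    simp only [Ctx.comp, Ctx.fill]
    congr 1
    funext j
    by_cases hji : j = i
    · subst hji
      rw [dif_pos rfl, dif_pos rfl, ih]
    · rw [dif_neg hji, dif_neg hji]

theorem csize_comp {τ ρ : Fin S.numSorts} :
    ∀ {σ : Fin S.numSorts} (c : Ctx S τ σ) (d : Ctx S ρ τ),
      (c.comp d).csize = c.csize + d.csize := by
  intro σ c
  induction c with
  | hole => intro d; simp [Ctx.comp, Ctx.csize]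
  | node f i c side ih =>
    intro d
    simp only [Ctx.comp, Ctx.csize, ih]
    omega

/-- A "letter": a constructor together with an argument position. -/
def Letter (S : ADTSig) : Type := Σ f : Fin S.numCtors, Fin (S.ctorArgs f).length

/-- `LChain ρ w τ`: the letters of `w` compose, starting with result sort `ρ`
at the top and ending with hole sort `τ`. -/
def LChain : Fin S.numSorts → List (Letter S) → Fin S.numSorts → Prop
  | ρ, [], τ => ρ = τ
  | ρ, a :: w, τ => S.ctorRes a.1 = ρ ∧ LChain ((S.ctorArgs a.1).get a.2) w τ

def castRes {τ ρ ρ' : Fin S.numSorts} (h : ρ = ρ') (c : Ctx S τ ρ) : Ctx S τ ρ' := h ▸ c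

/-- The canonical context determined by a word of letters, with side terms
given by `B`. -/
def wordCtx (B : ∀ τ, S.Term τ) (τ : Fin S.numSorts) :
    (w : List (Letter S)) → (ρ : Fin S.numSorts) → LChain ρ w τ → Ctx S τ ρ
  | [], _, h => castRes h.symm Ctx.hole
  | a :: w, _, h =>
      castRes h.1 (Ctx.node a.1 a.2 (wordCtx B τ w _ h.2)
        (fun j _ => B ((S.ctorArgs a.1).get j)))

/-- Code of the filling of a word context, computed purely on plain trees. -/
def pcode (B : ∀ τ, S.Term τ) : List (Letter S) → PT → PT
  | [], p => p
  | a :: w, p =>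
      .mk a.1.val (List.ofFn fun j =>
        if j = a.2 then pcode B w p else code (B ((S.ctorArgs a.1).get j)))

theorem code_castRes_fill {τ ρ ρ' : Fin S.numSorts} (e : ρ = ρ') (c : Ctx S τ ρ)
    (s : S.Term τ) : code ((castRes e c).fill s) = code (c.fill s) := by
  subst e; rfl

theorem code_wordCtx (B : ∀ τ, S.Term τ) (τ : Fin S.numSorts) :
    ∀ (w : List (Letter S)) (ρ : Fin S.numSorts) (h : LChain ρ w τ) (s : S.Term τ),
      code ((wordCtx B τ w ρ h).fill s) = pcode B w (code s) := by
  intro w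
  induction w with
  | nil => intro ρ h s; rw [wordCtx, code_castRes_fill]; rfl
  | cons a w ih =>
    intro ρ h s
    rw [wordCtx, code_castRes_fill]
    show code (Term.mk a.1 _) = _
    rw [pcode]
    simp only [code]
    congr 1
    rw [List.ofFn_inj]
    funext j
    by_cases hj : j = a.2
    · subst hj
      rw [dif_pos rfl, if_pos rfl, cast_self, ih]
    · rw [dif_neg hj, if_neg hj]

theorem psize_pcode (B : ∀ τ, S.Term τ) :
    ∀ (w : List (Letter S)) (p : PT), w.length + p.psize ≤ (pcode B w p).psize := by
  intro w
  induction w with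
  | nil => intro p; simp [pcode]
  | cons a w ih =>
    intro p
    rw [pcode]
    show _ ≤ PT.psize (.mk _ _)
    rw [PT.psize, PT.psizeL_ofFn]
    have h1 : (pcode B w p).psize ≤ ∑ j, PT.psize
        (if j = a.2 then pcode B w p else code (B ((S.ctorArgs a.1).get j))) := by
      have := Finset.single_le_sum
        (f := fun j => PT.psize (if j = a.2 then pcode B w p
          else code (B ((S.ctorArgs a.1).get j))))
        (fun _ _ => Nat.zero_le _) (Finset.mem_univ a.2)
      simpa using this
    have h2 := ih p
    simp only [List.length_cons]
    omega
theorem pcode_ne (B : ∀ τ, S.Term τ) (M : ℕ) (hM : ∀ τ, (B τ).size ≤ M) :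
    ∀ (d : ℕ) (U V : List (Letter S)) (pU pV : PT)
      (h1 : d < U.length) (h2 : d < V.length),
      U.take d = V.take d → U[d] ≠ V[d] →
      M + 1 ≤ U.length - d → 1 ≤ pU.psize →
      pcode B U pU ≠ pcode B V pV := by
  intro d
  induction d with
  | zero =>
    rintro (_ | ⟨a, U'⟩) (_ | ⟨b, V'⟩) pU pV h1 h2 hpre hne hlen hp heq
    · simp at h1
    · simp at h1
    · simp at h2
    simp only [List.getElem_cons_zero] at hne
    rw [pcode, pcode] at heq
    injection heq with hf hch
    obtain ⟨fa, ia⟩ := a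
    obtain ⟨fb, ib⟩ := b
    have hf' : fa = fb := Fin.val_injective hf
    subst hf'
    have hab : ia ≠ ib := by
      intro hh; exact hne (by rw [hh])
    have hfun := List.ofFn_inj.mp hch
    have h3 := congrFun hfun ia
    rw [if_pos rfl, if_neg hab] at h3
    dsimp only at h3
    have h4 := psize_pcode B U' pU
    have h5 : (code (B ((S.ctorArgs fa).get ia))).psize ≤ M := by
      rw [psize_code]; exact hM _
    rw [h3] at h4
    simp only [List.length_cons, Nat.sub_zero] at hlen
    have hlenU : M + 1 ≤ U'.length + 1 := hlen
    omega
  | succ d ih =>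
    rintro (_ | ⟨a, U'⟩) (_ | ⟨b, V'⟩) pU pV h1 h2 hpre hne hlen hp heq
    · simp at h1
    · simp at h1
    · simp at h2
    rw [List.take_succ_cons, List.take_succ_cons] at hpre
    injection hpre with hab hpre'
    subst hab
    rw [pcode, pcode] at heq
    injection heq with hf hch
    have hfun := List.ofFn_inj.mp hch
    have h3 := congrFun hfun a.2
    rw [if_pos rfl, if_pos rfl] at h3
    refine ih U' V' pU pV (by simpa using h1) (by simpa using h2) hpre' ?_ ?_ hp h3
    · simpa using hne
    · simpa using hlen

theorem exists_first_diff {α : Type _} :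
    ∀ (u v : List α), u.length = v.length → u ≠ v →
      ∃ d, ∃ (h1 : d < u.length) (h2 : d < v.length),
        u.take d = v.take d ∧ u[d] ≠ v[d] := by
  intro u
  induction u with
  | nil =>
    intro v hlen hne
    cases v with
    | nil => exact absurd rfl hne
    | cons b v => simp at hlen
  | cons a u ih =>
    intro v hlen hne
    cases v with
    | nil => simp at hlen
    | cons b v =>
      by_cases hab : a = b
      · subst hab
        have hne' : u ≠ v := by intro hh; exact hne (by rw [hh])
        obtain ⟨d, hd1, hd2, hpre, hdne⟩ := ih v (by simpa using hlen) hne'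
        exact ⟨d + 1, by simpa using hd1, by simpa using hd2,
          by simp [List.take_succ_cons, hpre], by simpa using hdne⟩
      · exact ⟨0, by simp, by simp, rfl, by simpa using hab⟩

theorem LChain_append {τ τ' : Fin S.numSorts} :
    ∀ (w₁ : List (Letter S)) (ρ : Fin S.numSorts), LChain ρ w₁ τ →
      ∀ w₂ : List (Letter S), LChain τ w₂ τ' → LChain ρ (w₁ ++ w₂) τ' := by
  intro w₁
  induction w₁ with
  | nil => intro ρ h w₂ h2; rw [show ρ = τ from h]; exact h2
  | cons a w ih => intro ρ h w₂ h2; exact ⟨h.1, ih _ h.2 w₂ h2⟩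

theorem LChain_flatten_replicate {σ : Fin S.numSorts} (w : List (Letter S))
    (h : LChain σ w σ) : ∀ k, LChain σ (List.flatten (List.replicate k w)) σ := by
  intro k
  induction k with
  | zero => exact rfl
  | succ k ih =>
    rw [List.replicate_succ, List.flatten_cons]
    exact LChain_append w σ h _ ih
/-- Parse an alternating walk into a word of letters. -/
def walkWord : List (DepVertex S) → List (Letter S)
  | .inr f :: .inl τ :: rest =>
      if h : τ ∈ S.ctorArgs f then
        ⟨f, ⟨(S.ctorArgs f).idxOf τ, List.idxOf_lt_length_iff.mpr h⟩⟩ :: walkWord rest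
      else []
  | _ => []

def toPair (a : Letter S) : List (DepVertex S) :=
  [.inr a.1, .inl ((S.ctorArgs a.1).get a.2)]

theorem parse_spec :
    ∀ (l : List (DepVertex S)) (τ ρ : Fin S.numSorts), l ≠ [] →
      List.Chain (DepEdge S) (.inl τ) l → l.getLast? = some (.inl ρ) →
      LChain τ (walkWord l) ρ ∧ l = (List.map toPair (walkWord l)).flatten
  | [] => by intro τ ρ h; exact absurd rfl h
  | .inl x :: rest => by
    intro τ ρ _ hc _
    simp only [List.Chain] at hc
    rw [List.isChain_cons_cons] at hc
    exact hc.1.elim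
  | [.inr f] => by
    intro τ ρ _ _ hl
    simp [List.getLast?] at hl
  | .inr f :: .inr g :: rest => by
    intro τ ρ _ hc _
    simp only [List.Chain] at hc
    rw [List.isChain_cons_cons, List.isChain_cons_cons] at hc
    exact hc.2.1.elim
  | .inr f :: .inl τ' :: rest => by
    intro τ ρ _ hc hl
    simp only [List.Chain] at hc
    rw [List.isChain_cons_cons, List.isChain_cons_cons] at hc
    obtain ⟨he1, he2, hc'⟩ := hc
    have hmem : τ' ∈ S.ctorArgs f := he2
    have hidx : (S.ctorArgs f).idxOf τ' < (S.ctorArgs f).length :=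
      List.idxOf_lt_length_iff.mpr hmem
    have hget : (S.ctorArgs f).get ⟨(S.ctorArgs f).idxOf τ', hidx⟩ = τ' :=
      List.getElem_idxOf hidx
    rw [show walkWord (.inr f :: .inl τ' :: rest) =
        ⟨f, ⟨(S.ctorArgs f).idxOf τ', hidx⟩⟩ :: walkWord rest from by
      rw [walkWord, dif_pos hmem]]
    cases rest with
    | nil =>
      have hρ : τ' = ρ := by
        simp [List.getLast?] at hl
        exact hl
      refine ⟨⟨he1, hget.trans hρ⟩, ?_⟩
      exact (congrArg (fun x => [Sum.inr f, Sum.inl x]) hget).symm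
    | cons r rest' =>
      have hl' : (r :: rest').getLast? = some (.inl ρ) := by
        rw [List.getLast?_cons_cons, List.getLast?_cons_cons] at hl
        exact hl
      obtain ⟨hch, hrec⟩ := parse_spec (r :: rest') τ' ρ (by simp) hc' hl'
      constructor
      · exact ⟨he1, by rw [hget]; exact hch⟩
      · show _ :: _ :: (r :: rest') = _
        show _ = toPair ⟨f, ⟨(S.ctorArgs f).idxOf τ', hidx⟩⟩ ++ (List.map toPair (walkWord (r :: rest'))).flatten
        rw [show toPair ⟨f, ⟨(S.ctorArgs f).idxOf τ', hidx⟩⟩ =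
          [.inr f, .inl τ'] from by simp [toPair, hget]]
        rw [← hrec]
        rfl

theorem comm_flatten {α : Type _} :
    ∀ (n : ℕ) (l₁ l₂ : List α), l₁.length + l₂.length ≤ n → l₁ ++ l₂ = l₂ ++ l₁ →
      ∃ (base : List α) (k₁ k₂ : ℕ),
        l₁ = (List.replicate k₁ base).flatten ∧ l₂ = (List.replicate k₂ base).flatten := by
  intro n
  induction n with
  | zero =>
    intro l₁ l₂ hlen _
    have h1 : l₁ = [] := by
      cases l₁ with
      | nil => rfl
      | cons a l => simp at hlen
    have h2 : l₂ = [] := by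
      cases l₂ with
      | nil => rfl
      | cons a l => simp at hlen
    exact ⟨[], 0, 0, by simp [h1], by simp [h2]⟩
  | succ n ih =>
    have main : ∀ lA lB : List α, lA.length ≤ lB.length →
        lA.length + lB.length ≤ n + 1 → lA ++ lB = lB ++ lA →
        ∃ (base : List α) (k₁ k₂ : ℕ),
          lA = (List.replicate k₁ base).flatten ∧ lB = (List.replicate k₂ base).flatten := by
      intro lA lB hle hlen hcomm
      by_cases hA : lA = []
      · exact ⟨lB, 0, 1, by simp [hA], by simp⟩
      · have hpos : 0 < lA.length := List.length_pos_iff.mpr hA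
        have htake : lB.take lA.length = lA := by
          have h1 : (lA ++ lB).take lA.length = lA := List.take_left
          rw [hcomm, List.take_append_of_le_length hle] at h1
          exact h1
        have hsplit : lB = lA ++ lB.drop lA.length := by
          conv_lhs => rw [← List.take_append_drop lA.length lB]
          rw [htake]
        have h' : lA ++ lB.drop lA.length = lB.drop lA.length ++ lA := by
          have h2 := hcomm
          rw [hsplit] at h2
          simp only [List.append_assoc] at h2
          exact List.append_cancel_left h2
        have hlen' : lA.length + (lB.drop lA.length).length ≤ n := by
          have h3 : lB.length = lA.length + (lB.drop lA.length).length := by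
            conv_lhs => rw [hsplit]
            simp
          omega
        obtain ⟨base, k₁, k₃, hb1, hb3⟩ := ih lA (lB.drop lA.length) hlen' h'
        refine ⟨base, k₁, k₁ + k₃, hb1, ?_⟩
        rw [hsplit, hb3, hb1, ← List.flatten_append, ← List.replicate_add]
    intro l₁ l₂ hlen h
    rcases le_or_gt l₁.length l₂.length with hle | hlt
    · exact main l₁ l₂ hle hlen h
    · obtain ⟨base, k₂, k₁, hb2, hb1⟩ := main l₂ l₁ hlt.le (by omega) h.symm
      exact ⟨base, k₁, k₂, hb1, hb2⟩
theorem finite_size_le (S : ADTSig) :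
    ∀ (N : ℕ) (σ : Fin S.numSorts), {t : S.Term σ | t.size ≤ N}.Finite := by
  intro N
  induction N with
  | zero =>
    intro σ
    have h : {t : S.Term σ | t.size ≤ 0} = ∅ := by
      ext t
      simp only [Set.mem_setOf_eq, Set.mem_empty_iff_false, iff_false]
      have := size_pos t
      omega
    rw [h]; exact Set.finite_empty
  | succ N ih =>
    intro σ
    classical
    haveI hfin : ∀ (f : {f : Fin S.numCtors // S.ctorRes f = σ})
        (i : Fin (S.ctorArgs f.1).length),
        Finite {u : S.Term ((S.ctorArgs f.1).get i) // u.size ≤ N} :=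
      fun f i => (ih _).to_subtype
    set g : (Σ f : {f : Fin S.numCtors // S.ctorRes f = σ},
        (i : Fin (S.ctorArgs f.1).length) → {u : S.Term ((S.ctorArgs f.1).get i) // u.size ≤ N})
        → S.Term σ := fun x => x.1.2 ▸ Term.mk x.1.1 (fun i => (x.2 i).1) with hg
    refine Set.Finite.subset (Set.finite_range g) ?_
    intro t ht
    cases t with
    | mk f args =>
      simp only [Set.mem_setOf_eq, Term.size] at ht
      refine ⟨⟨⟨f, rfl⟩, fun i => ⟨args i, ?_⟩⟩, ?_⟩
      · have h2 := Finset.single_le_sum (f := fun j => (args j).size)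
          (fun _ _ => Nat.zero_le _) (Finset.mem_univ i)
        simp only at h2
        omega
      · rfl
def boolCtx {σ : Fin S.numSorts} (d₁ d₂ : Ctx S σ σ) : List Bool → Ctx S σ σ
  | [] => .hole
  | b :: w => (cond b d₁ d₂).comp (boolCtx d₁ d₂ w)

theorem csize_boolCtx {σ : Fin S.numSorts} (d₁ d₂ : Ctx S σ σ) (m : ℕ)
    (hm1 : d₁.csize = m) (hm2 : d₂.csize = m) :
    ∀ w : List Bool, (boolCtx d₁ d₂ w).csize = w.length * m := by
  intro w
  induction w with
  | nil => simp [boolCtx, Ctx.csize]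
  | cons b w ih =>
    rw [boolCtx, csize_comp, ih]
    cases b <;> simp [hm1, hm2] <;> ring

theorem boolCtx_ne {σ : Fin S.numSorts} (d₁ d₂ : Ctx S σ σ)
    (hd : Incomparable d₁ d₂) :
    ∀ (w w' : List Bool), w.length = w'.length → w ≠ w' →
      ∀ s s' : S.Term σ, (boolCtx d₁ d₂ w).fill s ≠ (boolCtx d₁ d₂ w').fill s' := by
  intro w
  induction w with
  | nil =>
    intro w' hlen hne
    cases w' with
    | nil => exact absurd rfl hne
    | cons b w' => simp at hlen
  | cons b w ih =>
    intro w' hlen hne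
    cases w' with
    | nil => simp at hlen
    | cons b' w' =>
      intro s s' heq
      rw [boolCtx, boolCtx, comp_fill, comp_fill] at heq
      by_cases hbb : b = b'
      · subst hbb
        have h2 : (boolCtx d₁ d₂ w).fill s = (boolCtx d₁ d₂ w').fill s' :=
          fill_inj _ _ _ heq
        have hne' : w ≠ w' := fun hh => hne (by rw [hh])
        exact ih w' (by simpa using hlen) hne' s s' h2
      · cases b <;> cases b' <;> try exact absurd rfl hbb
        · exact hd _ _ heq.symm
        · exact hd _ _ heq

theorem incomparable_symm {τ₁ τ₂ σ : Fin S.numSorts} {c₁ : Ctx S τ₁ σ} {c₂ : Ctx S τ₂ σ}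
    (h : Incomparable c₁ c₂) : Incomparable c₂ c₁ :=
  fun s₁ s₂ heq => h s₂ s₁ heq.symm

theorem expanding_of_incomparable {S : ADTSig} {σ : Fin S.numSorts}
    (c₁ c₂ : Ctx S σ σ) (h : Incomparable c₁ c₂) : ExpandingSort S σ := by
  classical
  by_cases hne : Nonempty (S.Term σ)
  case neg =>
    intro n
    exact ⟨0, fun b' _ => Or.inl (fun t => absurd ⟨t⟩ hne)⟩
  obtain ⟨t₀⟩ := hne
  set m := c₁.csize + c₂.csize with hm_def
  have hm : 1 ≤ m := by
    rw [hm_def]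
    cases c₁ with
    | hole => exact absurd (h (c₂.fill t₀) t₀ rfl) (fun hh => hh)
    | node f i c side => simp [Ctx.csize]; omega
  set d₁ := c₁.comp c₂ with hd₁
  set d₂ := c₂.comp c₁ with hd₂
  have hm1 : d₁.csize = m := by rw [hd₁, csize_comp, hm_def]
  have hm2 : d₂.csize = m := by rw [hd₂, csize_comp, hm_def]; omega
  have hd : Incomparable d₁ d₂ := by
    intro s₁ s₂ heq
    rw [hd₁, hd₂, comp_fill, comp_fill] at heq
    exact h _ _ heq
  -- upward closure of the size image by steps of m
  have hstep : ∀ b'' : ℕ, (∃ t : S.Term σ, t.size = b'') →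
      ∃ t : S.Term σ, t.size = b'' + m := by
    rintro b'' ⟨t, ht⟩
    exact ⟨d₁.fill t, by rw [fill_size, ht, hm1]; omega⟩
  have hup : ∀ (b'' : ℕ), (∃ t : S.Term σ, t.size = b'') →
      ∀ j : ℕ, ∃ t : S.Term σ, t.size = b'' + j * m := by
    intro b'' hb j
    induction j with
    | zero => simpa using hb
    | succ j ihj =>
      have := hstep _ ihj
      have harith : b'' + j * m + m = b'' + (j + 1) * m := by ring
      rwa [harith] at this
  intro n
  set k := n with hk
  set P : ℕ → Prop := fun r => ∃ j, ∃ t : S.Term σ, t.size = r + j * m with hP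
  set μ : ℕ → ℕ := fun r => if hr : P r then r + Nat.find hr * m else 0 with hμ
  set B₀ := Finset.sup (Finset.range m) μ with hB₀
  refine ⟨B₀ + k * m + m, fun b' hb' => ?_⟩
  by_cases hex : ∃ t : S.Term σ, t.size = b'
  case neg =>
    left
    push_neg at hex
    exact hex
  right
  -- find a term of size b' - k * m
  have hrm : b' % m < m := Nat.mod_lt _ hm
  have hrep : P (b' % m) := ⟨b' / m, by rw [Nat.mod_add_div']; exact hex⟩
  have hμval : μ (b' % m) = b' % m + Nat.find hrep * m := dif_pos hrep
  have hμB : b' % m + Nat.find hrep * m ≤ B₀ := by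
    rw [← hμval, hB₀]
    exact Finset.le_sup (Finset.mem_range.mpr hrm)
  have hfind : ∃ t : S.Term σ, t.size = b' % m + Nat.find hrep * m := Nat.find_spec hrep
  have hq : k + Nat.find hrep ≤ b' / m := by
    have h1 : b' % m + b' / m * m = b' := Nat.mod_add_div' b' m
    have h4 : (k + Nat.find hrep) * m ≤ (b' / m) * m := by
      rw [add_mul]
      omega
    exact Nat.le_of_mul_le_mul_right h4 hm
  obtain ⟨s, hs⟩ := hup _ hfind (b' / m - k - Nat.find hrep)
  have hssize : s.size = b' - k * m := by
    rw [hs]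
    have h1 : b' % m + b' / m * m = b' := Nat.mod_add_div' b' m
    have hqa : b' / m = k + Nat.find hrep + (b' / m - k - Nat.find hrep) := by omega
    rw [hqa] at h1
    have h5 : (k + Nat.find hrep + (b' / m - k - Nat.find hrep)) * m
        = k * m + Nat.find hrep * m + (b' / m - k - Nat.find hrep) * m := by ring
    rw [h5] at h1
    omega
  have hkm : k * m ≤ b' := by omega
  -- now count: 2^k distinct terms of size b'
  haveI : Finite {t : S.Term σ // t.size = b'} := by
    have hsub : {t : S.Term σ | t.size = b'} ⊆ {t : S.Term σ | t.size ≤ b'} :=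
      fun t ht => le_of_eq ht
    exact ((finite_size_le S b' σ).subset hsub).to_subtype
  set F : (Fin k → Bool) → {t : S.Term σ // t.size = b'} :=
    fun w => ⟨(boolCtx d₁ d₂ (List.ofFn w)).fill s,
      by rw [fill_size, csize_boolCtx d₁ d₂ m hm1 hm2, List.length_ofFn, hssize]; omega⟩
    with hF
  have hFinj : Function.Injective F := by
    intro w w' hww
    by_contra hne'
    have hofn : List.ofFn w ≠ List.ofFn w' := fun hh => hne' (List.ofFn_inj.mp hh)
    exact boolCtx_ne d₁ d₂ hd (List.ofFn w) (List.ofFn w') (by simp) hofn s s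
      (congrArg Subtype.val hww)
  calc n ≤ 2 ^ k := Nat.lt_two_pow_self.le
    _ = Nat.card (Fin k → Bool) := by simp [Nat.card_eq_fintype_card]
    _ ≤ Nat.card {t : S.Term σ // t.size = b'} := Nat.card_le_card_of_injective F hFinj
end TwoPathsProof

open ADTSig in
/-- If there are two distinct paths from a sort `σ` to itself in the
dependency graph `D` that are not repetitions of one another (i.e., they are
not both repetitions of a common path), then there exist two incomparable
constructor terms `t₁[•], t₂[•]` of sort `σ` with holes of sort `σ`;
consequently, by the expansion lemma for incomparable terms, `σ` is
expanding. -/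
theorem two_paths_incomparable_expanding (S : ADTSig) (hS : S.WellDefined)
    (σ : Fin S.numSorts) (l₁ l₂ : List (DepVertex S))
    (h₁ : IsClosedWalk S σ l₁) (h₂ : IsClosedWalk S σ l₂)
    (hne : l₁ ≠ l₂)
    (hnorep : ¬ ∃ (base : List (DepVertex S)) (k₁ k₂ : ℕ),
       l₁ = (List.replicate k₁ base).flatten ∧
       l₂ = (List.replicate k₂ base).flatten) :
    (∃ t₁ t₂ : Ctx S σ σ, Incomparable t₁ t₂) ∧ ExpandingSort S σ := by
  classical
  open TwoPathsProof in
  obtain ⟨hne₁, hch₁, hl₁⟩ := h₁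
  obtain ⟨hne₂, hch₂, hl₂⟩ := h₂
  set B : ∀ τ, S.Term τ := fun τ => Classical.choice (hS τ) with hB
  set M : ℕ := Finset.sup Finset.univ (fun τ => (B τ).size) with hMdef
  have hM : ∀ τ, (B τ).size ≤ M := by
    intro τ
    rw [hMdef]
    exact Finset.le_sup (f := fun τ => (B τ).size) (Finset.mem_univ τ)
  obtain ⟨hc₁, hr₁⟩ := TwoPathsProof.parse_spec l₁ σ σ hne₁ hch₁ hl₁
  obtain ⟨hc₂, hr₂⟩ := TwoPathsProof.parse_spec l₂ σ σ hne₂ hch₂ hl₂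
  set w₁ := TwoPathsProof.walkWord l₁ with hw₁
  set w₂ := TwoPathsProof.walkWord l₂ with hw₂
  by_cases hcomm : w₁ ++ w₂ = w₂ ++ w₁
  · exfalso
    apply hnorep
    have hll : l₁ ++ l₂ = l₂ ++ l₁ := by
      calc l₁ ++ l₂ = (List.map TwoPathsProof.toPair (w₁ ++ w₂)).flatten := by
            rw [List.map_append, List.flatten_append, ← hr₁, ← hr₂]
        _ = (List.map TwoPathsProof.toPair (w₂ ++ w₁)).flatten := by rw [hcomm]
        _ = l₂ ++ l₁ := by rw [List.map_append, List.flatten_append, ← hr₁, ← hr₂]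
    exact TwoPathsProof.comm_flatten (l₁.length + l₂.length) l₁ l₂ le_rfl hll
  · -- the two concatenations differ: build incomparable contexts
    have hw₁ne : w₁ ≠ [] := by
      intro hh
      apply hne₁
      rw [hr₁, hh]
      rfl
    set u := w₁ ++ w₂ with hu_def
    set v := w₂ ++ w₁ with hv_def
    have hLpos : 1 ≤ u.length := by
      rw [hu_def, List.length_append]
      have hzero : w₁.length ≠ 0 := fun hh => hw₁ne (List.length_eq_zero_iff.mp hh)
      omega
    have hlen_eq : u.length = v.length := by
      rw [hu_def, hv_def, List.length_append, List.length_append]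
      omega
    obtain ⟨d, hd1, hd2, hpre, hdne⟩ :=
      TwoPathsProof.exists_first_diff u v hlen_eq hcomm
    have hcu : TwoPathsProof.LChain σ u σ :=
      TwoPathsProof.LChain_append w₁ σ hc₁ w₂ hc₂
    have hcv : TwoPathsProof.LChain σ v σ :=
      TwoPathsProof.LChain_append w₂ σ hc₂ w₁ hc₁
    set k := M + 1 with hk
    set U := (List.replicate k u).flatten with hU_def
    set V := (List.replicate k v).flatten with hV_def
    have hcU : TwoPathsProof.LChain σ U σ := TwoPathsProof.LChain_flatten_replicate u hcu k
    have hcV : TwoPathsProof.LChain σ V σ := TwoPathsProof.LChain_flatten_replicate v hcv k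
    have hUsplit : U = u ++ (List.replicate M u).flatten := by
      rw [hU_def, hk, List.replicate_succ, List.flatten_cons]
    have hVsplit : V = v ++ (List.replicate M v).flatten := by
      rw [hV_def, hk, List.replicate_succ, List.flatten_cons]
    have hUlen : U.length = k * u.length := by
      rw [hU_def]; simp
    have hVlen : V.length = k * u.length := by
      rw [hV_def, hlen_eq]; simp
    have hdU : d < U.length := by
      rw [hUlen]
      have := Nat.le_mul_of_pos_left u.length (show 0 < k by omega)
      omega
    have hdV : d < V.length := by rw [hVlen, ← hUlen]; exact hdU
    set t₁ := TwoPathsProof.wordCtx B σ U σ hcU with ht₁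
    set t₂ := TwoPathsProof.wordCtx B σ V σ hcV with ht₂
    have hinc : Incomparable t₁ t₂ := by
      intro s₁ s₂ heq
      have hcode := congrArg TwoPathsProof.code heq
      rw [ht₁, ht₂, TwoPathsProof.code_wordCtx, TwoPathsProof.code_wordCtx] at hcode
      refine TwoPathsProof.pcode_ne B M hM d U V
        (TwoPathsProof.code s₁) (TwoPathsProof.code s₂) hdU hdV ?_ ?_ ?_ ?_ hcode
      · rw [hUsplit, hVsplit, List.take_append_of_le_length (le_of_lt hd1),
          List.take_append_of_le_length (le_of_lt hd2)]
        exact hpre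
      · have e1 : U[d]'hdU = u[d]'hd1 :=
          (List.getElem_of_eq hUsplit hdU).trans (List.getElem_append_left hd1)
        have e2 : V[d]'hdV = v[d]'hd2 :=
          (List.getElem_of_eq hVsplit hdV).trans (List.getElem_append_left hd2)
        rw [e1, e2]
        exact hdne
      · rw [hUlen, hk]
        have h5 : (M + 1) * u.length = M * u.length + u.length := by ring
        have h6 : M ≤ M * u.length := Nat.le_mul_of_pos_right M (by omega)
        omega
      · rw [TwoPathsProof.psize_code]
        exact TwoPathsProof.size_pos s₁
    exact ⟨⟨t₁, t₂, hinc⟩, TwoPathsProof.expanding_of_incomparable t₁ t₂ hinc⟩
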